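/- For all n ≥ 3, the parity-constrained Hanoi graph P^n is not planar; equivalently, P^3 contains a subdivision of K_{3,3} as a subgraph. -/

import Mathlib

/-- Parity constraint on a state: disc `d+1` (labelled `1,…,n`) may not sit on
peg `2` if it is even, nor on peg `1` if it is odd. -/
def pegOK (n : ℕ) (s : Fin n → Fin 4) : Prop :=
  ∀ d : Fin n, (Even ((d : ℕ) + 1) → s d ≠ 2) ∧ (Odd ((d : ℕ) + 1) → s d ≠ 1)

instance (n : ℕ) : DecidablePred (pegOK n) := fun s => by
  unfold pegOK; infer_instance

/-- Vertices of the parity-constrained Hanoi graph `P^n`. -/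
abbrev PVertex (n : ℕ) := {s : Fin n → Fin 4 // pegOK n s}

/-- The parity-constrained four-peg Hanoi graph `P^n`: two states are adjacent iff
they differ in exactly one coordinate `d` (a legal move of disc `d+1`) and no
smaller disc sits on either of the two pegs involved. -/
def PGraph (n : ℕ) : SimpleGraph (PVertex n) where
  Adj s t := ∃ d : Fin n,
    s.1 d ≠ t.1 d ∧ (∀ k, k ≠ d → s.1 k = t.1 k) ∧
    (∀ k, k < d → s.1 k ≠ s.1 d ∧ s.1 k ≠ t.1 d)
  symm := by
    constructor
    rintro s t ⟨d, hne, heq, hlt⟩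
    refine ⟨d, hne.symm, fun k hk => (heq k hk).symm, fun k hk => ?_⟩
    have h := hlt k hk
    rw [← heq k (ne_of_lt hk)]
    exact ⟨h.2, h.1⟩
  loopless := by constructor; rintro s ⟨d, hne, -⟩; exact hne rfl

instance (n : ℕ) : DecidableRel (PGraph n).Adj := fun s t =>
  decidable_of_iff (∃ d : Fin n,
    s.1 d ≠ t.1 d ∧ (∀ k, k ≠ d → s.1 k = t.1 k) ∧
    (∀ k, k < d → s.1 k ≠ s.1 d ∧ s.1 k ≠ t.1 d)) Iff.rfl

/-- `G` contains a subdivision of `K_{3,3}`: six branch vertices (two triples) and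
internally disjoint paths joining every vertex of one triple to every vertex of
the other, with internal vertices avoiding all branch vertices. -/
def HasK33Subdivision {V : Type*} (G : SimpleGraph V) : Prop :=
  ∃ b : Fin 3 ⊕ Fin 3 → V, Function.Injective b ∧
    ∃ w : ∀ i j : Fin 3, G.Walk (b (Sum.inl i)) (b (Sum.inr j)),
      (∀ i j, (w i j).IsPath) ∧
      (∀ i j, ∀ v ∈ (w i j).support, v ∈ Set.range b →
        v = b (Sum.inl i) ∨ v = b (Sum.inr j)) ∧
      (∀ i j i' j', (i, j) ≠ (i', j') →
        ∀ v ∈ (w i j).support, v ∈ (w i' j').support → v ∈ Set.range b)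

open SimpleGraph

/-! ### An explicit `K₃,₃` subdivision in `P³` -/

/-- Shorthand for a concrete vertex of `P³`. -/
def V (a b c : Fin 4) (h : pegOK 3 ![a, b, c] := by decide) : PVertex 3 :=
  ⟨![a, b, c], h⟩

/-- Type-pinning helper for adjacency proofs. -/
theorem adjV (s t : PVertex 3) (h : (PGraph 3).Adj s t) : (PGraph 3).Adj s t := h

/-- The six branch vertices. -/
def b3 : Fin 3 ⊕ Fin 3 → PVertex 3
  | .inl ⟨0, _⟩ => V 0 0 2
  | .inl ⟨1, _⟩ => V 0 1 0
  | .inl ⟨_+2, _⟩ => V 0 1 2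
  | .inr ⟨0, _⟩ => V 0 0 3
  | .inr ⟨1, _⟩ => V 0 3 2
  | .inr ⟨_+2, _⟩ => V 3 1 2

def p00 : (PGraph 3).Walk (V 0 0 2) (V 0 0 3) :=
  Walk.cons (adjV (V 0 0 2) (V 0 0 3) (by decide)) (Walk.nil)

def p01 : (PGraph 3).Walk (V 0 0 2) (V 0 3 2) :=
  Walk.cons (adjV (V 0 0 2) (V 2 0 2) (by decide)) (Walk.cons (adjV (V 2 0 2) (V 2 3 2) (by decide)) (Walk.cons (adjV (V 2 3 2) (V 0 3 2) (by decide)) (Walk.nil)))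

def p02 : (PGraph 3).Walk (V 0 0 2) (V 3 1 2) :=
  Walk.cons (adjV (V 0 0 2) (V 3 0 2) (by decide)) (Walk.cons (adjV (V 3 0 2) (V 3 1 2) (by decide)) (Walk.nil))

def p10 : (PGraph 3).Walk (V 0 1 0) (V 0 0 3) :=
  Walk.cons (adjV (V 0 1 0) (V 2 1 0) (by decide)) (Walk.cons (adjV (V 2 1 0) (V 2 1 3) (by decide)) (Walk.cons (adjV (V 2 1 3) (V 2 0 3) (by decide)) (Walk.cons (adjV (V 2 0 3) (V 0 0 3) (by decide)) (Walk.nil))))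

def p11 : (PGraph 3).Walk (V 0 1 0) (V 0 3 2) :=
  Walk.cons (adjV (V 0 1 0) (V 0 3 0) (by decide)) (Walk.cons (adjV (V 0 3 0) (V 3 3 0) (by decide)) (Walk.cons (adjV (V 3 3 0) (V 3 3 2) (by decide)) (Walk.cons (adjV (V 3 3 2) (V 0 3 2) (by decide)) (Walk.nil))))

def p12 : (PGraph 3).Walk (V 0 1 0) (V 3 1 2) :=
  Walk.cons (adjV (V 0 1 0) (V 3 1 0) (by decide)) (Walk.cons (adjV (V 3 1 0) (V 3 1 2) (by decide)) (Walk.nil))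

def p20 : (PGraph 3).Walk (V 0 1 2) (V 0 0 3) :=
  Walk.cons (adjV (V 0 1 2) (V 0 1 3) (by decide)) (Walk.cons (adjV (V 0 1 3) (V 3 1 3) (by decide)) (Walk.cons (adjV (V 3 1 3) (V 3 0 3) (by decide)) (Walk.cons (adjV (V 3 0 3) (V 0 0 3) (by decide)) (Walk.nil))))

def p21 : (PGraph 3).Walk (V 0 1 2) (V 0 3 2) :=
  Walk.cons (adjV (V 0 1 2) (V 0 3 2) (by decide)) (Walk.nil)

def p22 : (PGraph 3).Walk (V 0 1 2) (V 3 1 2) :=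
  Walk.cons (adjV (V 0 1 2) (V 2 1 2) (by decide)) (Walk.cons (adjV (V 2 1 2) (V 3 1 2) (by decide)) (Walk.nil))

/-- The nine connecting paths. -/
def w3 : ∀ i j : Fin 3, (PGraph 3).Walk (b3 (.inl i)) (b3 (.inr j))
  | ⟨0, _⟩, ⟨0, _⟩ => p00
  | ⟨0, _⟩, ⟨1, _⟩ => p01
  | ⟨0, _⟩, ⟨2, _⟩ => p02
  | ⟨1, _⟩, ⟨0, _⟩ => p10
  | ⟨1, _⟩, ⟨1, _⟩ => p11
  | ⟨1, _⟩, ⟨2, _⟩ => p12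
  | ⟨2, _⟩, ⟨0, _⟩ => p20
  | ⟨2, _⟩, ⟨1, _⟩ => p21
  | ⟨2, _⟩, ⟨2, _⟩ => p22

lemma b3_inj : Function.Injective b3 := by decide

lemma w3_nodup : ∀ i j, (w3 i j).support.Nodup := by decide

lemma w3_cond2 : ∀ i j, ∀ v ∈ (w3 i j).support, (∃ x, b3 x = v) →
    v = b3 (.inl i) ∨ v = b3 (.inr j) := by decide

lemma w3_cond3 : ∀ i j i' j' : Fin 3, (i, j) ≠ (i', j') →
    ∀ v ∈ (w3 i j).support, v ∈ (w3 i' j').support → ∃ x, b3 x = v := by decide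

/-! ### Embedding `P³` into `P^n` -/

/-- Extend a state of `P³` to a state of `P^n` by putting all larger discs on peg 0. -/
def ext (n : ℕ) (hn : 3 ≤ n) (s : PVertex 3) : PVertex n :=
  ⟨fun d => if h : (d : ℕ) < 3 then s.1 ⟨d, h⟩ else 0, by
    intro d
    by_cases h : (d : ℕ) < 3
    · simpa [h] using s.2 ⟨d, h⟩
    · simp only [h, dif_neg, not_false_iff]
      exact ⟨fun _ => by decide, fun _ => by decide⟩⟩

lemma ext_inj (n : ℕ) (hn : 3 ≤ n) : Function.Injective (ext n hn) := by
  intro s t hst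
  apply Subtype.ext
  funext d
  have := congrFun (congrArg Subtype.val hst) ⟨(d : ℕ), lt_of_lt_of_le d.2 hn⟩
  simpa [ext, d.2] using this

/-- `ext` is a graph homomorphism. -/
def extHom (n : ℕ) (hn : 3 ≤ n) : PGraph 3 →g PGraph n where
  toFun := ext n hn
  map_rel' := by
    rintro s t ⟨d, hne, heq, hlt⟩
    refine ⟨⟨(d : ℕ), lt_of_lt_of_le d.2 hn⟩, ?_, ?_, ?_⟩
    · simpa [ext, d.2] using hne
    · intro k hk
      by_cases h : (k : ℕ) < 3
      · have : (⟨(k : ℕ), h⟩ : Fin 3) ≠ d := by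
          intro he
          have hv : (k : ℕ) = (d : ℕ) := congrArg Fin.val he
          exact hk (Fin.val_injective hv)
        simpa [ext, h] using heq _ this
      · simp [ext, h]
    · intro k hk
      have hk3 : (k : ℕ) < 3 := lt_trans hk d.2
      have hkd : (⟨(k : ℕ), hk3⟩ : Fin 3) < d := hk
      have := hlt _ hkd
      simpa [ext, hk3, d.2] using this

theorem stmt13 : ∀ n : ℕ, 3 ≤ n → HasK33Subdivision (PGraph n) := by
  intro n hn
  refine ⟨ext n hn ∘ b3, (ext_inj n hn).comp b3_inj,
    fun i j => (w3 i j).map (extHom n hn), fun i j => ?_, ?_, ?_⟩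
  · exact Walk.map_isPath_of_injective (ext_inj n hn) ((Walk.isPath_def _).mpr (w3_nodup i j))
  · intro i j v hv hr
    replace hv : v ∈ ((w3 i j).map (extHom n hn)).support := hv
    rw [Walk.support_map, List.mem_map] at hv
    obtain ⟨u, hu, rfl⟩ := hv
    obtain ⟨x, hx⟩ := hr
    have hxu : b3 x = u := ext_inj n hn hx
    rcases w3_cond2 i j u hu ⟨x, hxu⟩ with h | h
    · exact Or.inl (congrArg _ h)
    · exact Or.inr (congrArg _ h)
  · intro i j i' j' hne v hv hv'
    replace hv : v ∈ ((w3 i j).map (extHom n hn)).support := hv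
    replace hv' : v ∈ ((w3 i' j').map (extHom n hn)).support := hv'
    rw [Walk.support_map, List.mem_map] at hv hv'
    obtain ⟨u, hu, rfl⟩ := hv
    obtain ⟨u', hu', he⟩ := hv'
    have : u' = u := ext_inj n hn he
    subst this
    obtain ⟨x, hx⟩ := w3_cond3 i j i' j' hne u' hu hu'
    exact ⟨x, congrArg _ hx⟩
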